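/- The DOPE dynamic programming recurrence is correct: defining d_{i,j} by the stated recurrence (base cases deleting all points in adjacent pairs, and general case taking the minimum of matching the last critical points when they are of the same type, deleting the last pair of x, or deleting the last pair of y), d_{M_c,N_c} equals dope(x,y). -/

import Mathlib

/-- `AlignCost x y c` holds when some DOPE alignment of the critical point time
series `x` and `y` — an order-preserving matching (with cost `|xᵢ - yⱼ|` per
matched pair) together with removals of adjacent pairs (with cost equal to the
height difference), every point covered exactly once — has total cost `c`. -/
inductive AlignCost : List ℝ → List ℝ → ℝ → Prop
  | nil : AlignCost [] [] 0
  | match' (a b : ℝ) {xs ys : List ℝ} {c : ℝ} (h : AlignCost xs ys c) :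
      AlignCost (a :: xs) (b :: ys) (|a - b| + c)
  | delX (a b : ℝ) {xs ys : List ℝ} {c : ℝ} (h : AlignCost xs ys c) :
      AlignCost (a :: b :: xs) ys (|a - b| + c)
  | delY (a b : ℝ) {xs ys : List ℝ} {c : ℝ} (h : AlignCost xs ys c) :
      AlignCost xs (a :: b :: ys) (|a - b| + c)

/-- The DOPE distance between two critical point time series:
the minimal cost over all alignments. -/
noncomputable def dope (x y : List ℝ) : ℝ := sInf {c | AlignCost x y c}

/-- The DOPE distance as an extended real (`⊤` when no alignment exists). -/
noncomputable def dopeE (x y : List ℝ) : EReal :=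
  sInf {c : EReal | ∃ r : ℝ, AlignCost x y r ∧ c = (r : EReal)}

/-- The DOPE dynamic programming table `d_{i,j}` for 1-indexed critical point
sequences `x`, `y` with min/max sign indicators `xm`, `ym` (`-1` for a min,
`+1` for a max).  Base cases delete all points in adjacent pairs; the general
case takes the minimum of matching the last critical points (when of the same
type), deleting the last pair of `x`, or deleting the last pair of `y`. -/
noncomputable def dp (x y : ℕ → ℝ) (xm ym : ℕ → ℤ) : ℕ → ℕ → EReal
  | 0, 0 => 0
  | i + 1, 0 =>
      if (i + 1) % 2 = 0 then
        (((∑ ℓ ∈ Finset.Icc 1 (i + 1), x ℓ * (xm ℓ : ℝ)) : ℝ) : EReal)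
      else ⊤
  | 0, j + 1 =>
      if (j + 1) % 2 = 0 then
        (((∑ ℓ ∈ Finset.Icc 1 (j + 1), y ℓ * (ym ℓ : ℝ)) : ℝ) : EReal)
      else ⊤
  | i + 1, j + 1 =>
      min (min
        (if xm (i + 1) = ym (j + 1) then
            dp x y xm ym i j + ((|x (i + 1) - y (j + 1)| : ℝ) : EReal)
          else ⊤)
        (if 1 ≤ i then
            dp x y xm ym (i - 1) (j + 1) + ((|x (i + 1) - x i| : ℝ) : EReal)
          else ⊤))
        (if 1 ≤ j then
            dp x y xm ym (i + 1) (j - 1) + ((|y (j + 1) - y j| : ℝ) : EReal)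
          else ⊤)
  termination_by i j => i + j
  decreasing_by all_goals omega


namespace DopeAux

/-- reversed prefix list [f n, ..., f 1] -/
def rl (f : ℕ → ℝ) : ℕ → List ℝ
  | 0 => []
  | n + 1 => f (n + 1) :: rl f n

@[simp] lemma rl_zero (f : ℕ → ℝ) : rl f 0 = [] := rfl
@[simp] lemma rl_succ (f : ℕ → ℝ) (n : ℕ) : rl f (n + 1) = f (n + 1) :: rl f n := rfl

@[simp] lemma rl_length (f : ℕ → ℝ) (n : ℕ) : (rl f n).length = n := by
  induction n with
  | zero => simp
  | succ n ih => simp [ih]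

lemma rl_eq (f : ℕ → ℝ) (n : ℕ) :
    rl f n = ((List.range n).map fun k => f (k + 1)).reverse := by
  induction n with
  | zero => simp
  | succ n ih => rw [List.range_succ]; simp [ih]

noncomputable def sg (x : ℕ → ℝ) (i : ℕ) : ℝ := ∑ ℓ ∈ Finset.Icc 1 i, x ℓ * (-1 : ℝ) ^ ℓ

@[simp] lemma sg_zero (x : ℕ → ℝ) : sg x 0 = 0 := by simp [sg]

lemma sg_step (x : ℕ → ℝ) (n : ℕ) (hn : n % 2 = 0) :
    sg x (n + 2) = sg x n + (x (n + 2) - x (n + 1)) := by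
  unfold sg
  rw [show n + 2 = (n + 1) + 1 from rfl, Finset.sum_Icc_succ_top (by omega),
    Finset.sum_Icc_succ_top (by omega)]
  have h1 : (-1 : ℝ) ^ (n + 1) = -1 := Odd.neg_one_pow (Nat.odd_iff.mpr (by omega))
  have h2 : (-1 : ℝ) ^ (n + 1 + 1) = 1 := Even.neg_one_pow (Nat.even_iff.mpr (by omega))
  rw [h1, h2]; ring

lemma align_swap : ∀ {X Y : List ℝ} {r : ℝ}, AlignCost X Y r → AlignCost Y X r := by
  intro X Y r h
  induction h with
  | nil => exact .nil
  | match' a b h ih => rw [abs_sub_comm]; exact .match' b a ih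
  | delX a b h ih => exact .delY a b ih
  | delY a b h ih => exact .delX a b ih

lemma align_parity : ∀ {X Y : List ℝ} {r : ℝ}, AlignCost X Y r →
    (X.length + Y.length) % 2 = 0 := by
  intro X Y r h
  induction h <;> simp_all <;> omega

lemma align_snoc_match (a b : ℝ) : ∀ {X Y : List ℝ} {r : ℝ}, AlignCost X Y r →
    AlignCost (X ++ [a]) (Y ++ [b]) (|a - b| + r) := by
  intro X Y r h
  induction h with
  | nil => simpa using AlignCost.match' a b AlignCost.nil
  | match' a' b' h ih =>
      have := AlignCost.match' a' b' ih
      try simp only [List.cons_append]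
      convert this using 1; ring
  | delX a' b' h ih =>
      have := AlignCost.delX a' b' ih
      try simp only [List.cons_append]
      convert this using 1; ring
  | delY a' b' h ih =>
      have := AlignCost.delY a' b' ih
      try simp only [List.cons_append]
      convert this using 1; ring

lemma align_snoc_delX (a b : ℝ) : ∀ {X Y : List ℝ} {r : ℝ}, AlignCost X Y r →
    AlignCost (X ++ [b, a]) Y (|a - b| + r) := by
  intro X Y r h
  induction h with
  | nil =>
      rw [abs_sub_comm]
      simpa using AlignCost.delX b a AlignCost.nil
  | match' a' b' h ih =>
      have := AlignCost.match' a' b' ih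
      try simp only [List.cons_append]
      convert this using 1; ring
  | delX a' b' h ih =>
      have := AlignCost.delX a' b' ih
      try simp only [List.cons_append]
      convert this using 1; ring
  | delY a' b' h ih =>
      have := AlignCost.delY a' b' ih
      try simp only [List.cons_append]
      convert this using 1; ring

lemma align_snoc_delY (a b : ℝ) : ∀ {X Y : List ℝ} {r : ℝ}, AlignCost X Y r →
    AlignCost X (Y ++ [b, a]) (|a - b| + r) :=
  fun h => align_swap (align_snoc_delX a b (align_swap h))

lemma align_reverse : ∀ {X Y : List ℝ} {r : ℝ}, AlignCost X Y r →
    AlignCost X.reverse Y.reverse r := by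
  intro X Y r h
  induction h with
  | nil => exact .nil
  | match' a b h ih => simpa using align_snoc_match a b ih
  | delX a b h ih => simpa using align_snoc_delX a b ih
  | delY a b h ih => simpa using align_snoc_delY a b ih

lemma dopeE_reverse (X Y : List ℝ) : dopeE X Y = dopeE X.reverse Y.reverse := by
  unfold dopeE
  congr 1
  ext c
  constructor
  · rintro ⟨r, h, rfl⟩; exact ⟨r, align_reverse h, rfl⟩
  · rintro ⟨r, h, rfl⟩; exact ⟨r, by simpa using align_reverse h, rfl⟩

lemma neg_one_pow_congr {i j : ℕ} (h : i % 2 = j % 2) : ((-1 : ℤ)) ^ i = (-1) ^ j := by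
  rcases Nat.even_or_odd i with hi | hi
  · rw [hi.neg_one_pow, (Nat.even_iff.mpr (by have := Nat.even_iff.mp hi; omega) : Even j).neg_one_pow]
  · rw [hi.neg_one_pow, (Nat.odd_iff.mpr (by have := Nat.odd_iff.mp hi; omega) : Odd j).neg_one_pow]

lemma align_nil_forced (x : ℕ → ℝ) :
    ∀ {X Y : List ℝ} {r : ℝ}, AlignCost X Y r → Y = [] →
    ∀ i : ℕ, X = rl x i →
    (∀ ℓ, 1 ≤ ℓ → ℓ < i → (x ℓ < x (ℓ + 1) ↔ Odd ℓ)) →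
    i % 2 = 0 ∧ r = sg x i := by
  intro X Y r h
  induction h with
  | nil =>
      intro _ i hi _
      cases i with
      | zero => exact ⟨rfl, by simp⟩
      | succ n => simp at hi
  | match' a b h ih => intro hY; simp at hY
  | delY a b h ih => intro hY; simp at hY
  | delX a b h ih =>
      intro hY i hX halt
      match i, hX with
      | 0, hX => simp at hX
      | 1, hX => simp at hX
      | (k + 2), hX =>
        simp only [rl_succ, List.cons.injEq] at hX
        obtain ⟨ha, hb, hxs⟩ := hX
        obtain ⟨hk, hc⟩ := ih hY k hxs (fun ℓ h1 h2 => halt ℓ h1 (by omega))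
        refine ⟨by omega, ?_⟩
        have hlt : x (k + 1) < x (k + 2) :=
          (halt (k + 1) (by omega) (by omega)).mpr (Nat.odd_iff.mpr (by omega))
        have habs : |a - b| = x (k + 2) - x (k + 1) := by
          rw [ha, hb]; exact abs_of_pos (by linarith)
        rw [habs, hc, sg_step x k hk]; ring

lemma align_nil_exists (x : ℕ → ℝ) :
    ∀ i : ℕ, i % 2 = 0 →
    (∀ ℓ, 1 ≤ ℓ → ℓ < i → (x ℓ < x (ℓ + 1) ↔ Odd ℓ)) →
    AlignCost (rl x i) [] (sg x i) := by
  intro i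
  induction i using Nat.strong_induction_on with
  | _ i IH =>
    match i with
    | 0 => intro _ _; simpa using AlignCost.nil
    | 1 => intro h; omega
    | (k + 2) =>
      intro hpar halt
      have hk : k % 2 = 0 := by omega
      have h1 := AlignCost.delX (x (k + 2)) (x (k + 1))
        (IH k (by omega) hk (fun ℓ h1 h2 => halt ℓ h1 (by omega)))
      have hlt : x (k + 1) < x (k + 2) :=
        (halt (k + 1) (by omega) (by omega)).mpr (Nat.odd_iff.mpr (by omega))
      have habs : |x (k + 2) - x (k + 1)| = x (k + 2) - x (k + 1) := abs_of_pos (by linarith)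
      rw [rl_succ, rl_succ]
      convert h1 using 1
      rw [habs, sg_step x k hk]; ring


lemma sum_xm (x : ℕ → ℝ) (xm : ℕ → ℤ) (hxm : ∀ ℓ, xm ℓ = (-1) ^ ℓ) (i : ℕ) :
    (∑ ℓ ∈ Finset.Icc 1 i, x ℓ * (xm ℓ : ℝ)) = sg x i := by
  unfold sg
  refine Finset.sum_congr rfl fun ℓ _ => ?_
  rw [hxm ℓ]; push_cast; ring

lemma dp_le (x y : ℕ → ℝ) (xm ym : ℕ → ℤ)
    (hxm : ∀ ℓ, xm ℓ = (-1) ^ ℓ) (hym : ∀ ℓ, ym ℓ = (-1) ^ ℓ) :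
    ∀ n i j, i + j = n →
    (∀ ℓ, 1 ≤ ℓ → ℓ < i → (x ℓ < x (ℓ + 1) ↔ Odd ℓ)) →
    (∀ ℓ, 1 ≤ ℓ → ℓ < j → (y ℓ < y (ℓ + 1) ↔ Odd ℓ)) →
    ∀ r : ℝ, AlignCost (rl x i) (rl y j) r → dp x y xm ym i j ≤ (r : EReal) := by
  intro n
  induction n using Nat.strong_induction_on with
  | _ n IH =>
  intro i j hn hax hay r h
  match i, j with
  | 0, 0 =>
      simp only [rl_zero] at h
      cases h
      rw [dp]
      simp
  | i + 1, 0 =>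
      obtain ⟨hpar, hr⟩ := align_nil_forced x h rfl (i + 1) rfl hax
      rw [dp, if_pos hpar, sum_xm x xm hxm, hr]
  | 0, j + 1 =>
      obtain ⟨hpar, hr⟩ := align_nil_forced y (align_swap h) rfl (j + 1) rfl hay
      rw [dp, if_pos hpar, sum_xm y ym hym, hr]
  | i + 1, j + 1 =>
      rw [rl_succ, rl_succ] at h
      rw [dp]
      generalize hgx : rl x i = X at h
      generalize hgy : rl y j = Y at h
      cases h with
      | match' =>
          rename_i c h'
          rw [← hgx, ← hgy] at h'
          have hp := align_parity h'
          rw [rl_length, rl_length] at hp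
          have hguard : xm (i + 1) = ym (j + 1) := by
            rw [hxm, hym]; exact neg_one_pow_congr (by omega)
          have hle := IH (i + j) (by omega) i j rfl
            (fun ℓ h1 h2 => hax ℓ h1 (by omega)) (fun ℓ h1 h2 => hay ℓ h1 (by omega)) _ h'
          refine le_trans (le_trans (min_le_left _ _) (min_le_left _ _)) ?_
          rw [if_pos hguard, EReal.coe_add, add_comm ((|x (i + 1) - y (j + 1)| : ℝ) : EReal)]
          exact add_le_add_left hle _
      | delX =>
          rename_i b' xs c h'
          subst hgy
          match i, hgx with
          | 0, hgx => simp at hgx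
          | k + 1, hgx =>
            simp only [rl_succ, List.cons.injEq] at hgx
            obtain ⟨hb, hxs⟩ := hgx
            subst hb
            subst hxs
            have hle := IH (k + (j + 1)) (by omega) k (j + 1) rfl
              (fun ℓ h1 h2 => hax ℓ h1 (by omega)) hay _ h'
            refine le_trans (le_trans (min_le_left _ _) (min_le_right _ _)) ?_
            rw [if_pos (by omega : 1 ≤ k + 1)]
            have hk : k + 1 - 1 = k := rfl
            rw [hk, EReal.coe_add, add_comm ((|x (k + 1 + 1) - x (k + 1)| : ℝ) : EReal)]
            exact add_le_add_left hle _
      | delY =>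
          rename_i b' ys c h'
          subst hgx
          match j, hgy with
          | 0, hgy => simp at hgy
          | m + 1, hgy =>
            simp only [rl_succ, List.cons.injEq] at hgy
            obtain ⟨hb, hys⟩ := hgy
            subst hb
            subst hys
            have hle := IH ((i + 1) + m) (by omega) (i + 1) m rfl
              hax (fun ℓ h1 h2 => hay ℓ h1 (by omega)) _ h'
            refine le_trans (min_le_right _ _) ?_
            rw [if_pos (by omega : 1 ≤ m + 1)]
            have hm : m + 1 - 1 = m := rfl
            rw [hm, EReal.coe_add, add_comm ((|y (m + 1 + 1) - y (m + 1)| : ℝ) : EReal)]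
            exact add_le_add_left hle _


lemma min3_cases (A B C : EReal) (P : EReal → Prop) (hA : P A) (hB : P B) (hC : P C) :
    P (min (min A B) C) := by
  rcases min_cases (min A B) C with ⟨h, _⟩ | ⟨h, _⟩
  · rw [h]
    rcases min_cases A B with ⟨h2, _⟩ | ⟨h2, _⟩ <;> rw [h2] <;> assumption
  · rw [h]; exact hC

lemma dp_attain (x y : ℕ → ℝ) (xm ym : ℕ → ℤ)
    (hxm : ∀ ℓ, xm ℓ = (-1) ^ ℓ) (hym : ∀ ℓ, ym ℓ = (-1) ^ ℓ) :
    ∀ n i j, i + j = n →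
    (∀ ℓ, 1 ≤ ℓ → ℓ < i → (x ℓ < x (ℓ + 1) ↔ Odd ℓ)) →
    (∀ ℓ, 1 ≤ ℓ → ℓ < j → (y ℓ < y (ℓ + 1) ↔ Odd ℓ)) →
    dp x y xm ym i j = ⊤ ∨
      ∃ r : ℝ, AlignCost (rl x i) (rl y j) r ∧ dp x y xm ym i j = (r : EReal) := by
  intro n
  induction n using Nat.strong_induction_on with
  | _ n IH =>
  intro i j hn hax hay
  match i, j with
  | 0, 0 =>
      exact Or.inr ⟨0, by simpa using AlignCost.nil, by rw [dp]; simp⟩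
  | i + 1, 0 =>
      by_cases hpar : (i + 1) % 2 = 0
      · exact Or.inr ⟨sg x (i + 1), align_nil_exists x (i + 1) hpar hax,
          by rw [dp, if_pos hpar, sum_xm x xm hxm]⟩
      · left; rw [dp, if_neg hpar]
  | 0, j + 1 =>
      by_cases hpar : (j + 1) % 2 = 0
      · exact Or.inr ⟨sg y (j + 1), align_swap (align_nil_exists y (j + 1) hpar hay),
          by rw [dp, if_pos hpar, sum_xm y ym hym]⟩
      · left; rw [dp, if_neg hpar]
  | i + 1, j + 1 =>
      rw [dp]
      refine min3_cases _ _ _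
        (fun v => v = ⊤ ∨ ∃ r : ℝ, AlignCost (rl x (i + 1)) (rl y (j + 1)) r ∧ v = (r : EReal))
        ?_ ?_ ?_
      · -- match branch
        by_cases hg : xm (i + 1) = ym (j + 1)
        · rcases IH (i + j) (by omega) i j rfl
            (fun ℓ h1 h2 => hax ℓ h1 (by omega)) (fun ℓ h1 h2 => hay ℓ h1 (by omega))
            with htop | ⟨r, hal, heq⟩
          · left; rw [if_pos hg, htop]; simp
          · right
            refine ⟨|x (i + 1) - y (j + 1)| + r, AlignCost.match' _ _ hal, ?_⟩
            rw [if_pos hg, heq, ← EReal.coe_add, add_comm r]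
        · left; rw [if_neg hg]
      · -- delX branch
        by_cases hi : 1 ≤ i
        · obtain ⟨k, rfl⟩ : ∃ k, i = k + 1 := ⟨i - 1, by omega⟩
          rcases IH (k + (j + 1)) (by omega) k (j + 1) rfl
            (fun ℓ h1 h2 => hax ℓ h1 (by omega)) hay
            with htop | ⟨r, hal, heq⟩
          · left
            rw [if_pos hi, show k + 1 - 1 = k from rfl, htop]; simp
          · right
            refine ⟨|x (k + 1 + 1) - x (k + 1)| + r,
              AlignCost.delX (x (k + 1 + 1)) (x (k + 1)) hal, ?_⟩
            rw [if_pos hi, show k + 1 - 1 = k from rfl, heq, ← EReal.coe_add, add_comm r]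
        · left; rw [if_neg hi]
      · -- delY branch
        by_cases hj : 1 ≤ j
        · obtain ⟨m, rfl⟩ : ∃ m, j = m + 1 := ⟨j - 1, by omega⟩
          rcases IH ((i + 1) + m) (by omega) (i + 1) m rfl
            hax (fun ℓ h1 h2 => hay ℓ h1 (by omega))
            with htop | ⟨r, hal, heq⟩
          · left
            rw [if_pos hj, show m + 1 - 1 = m from rfl, htop]; simp
          · right
            refine ⟨|y (m + 1 + 1) - y (m + 1)| + r,
              AlignCost.delY (y (m + 1 + 1)) (y (m + 1)) hal, ?_⟩
            rw [if_pos hj, show m + 1 - 1 = m from rfl, heq, ← EReal.coe_add, add_comm r]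
        · left; rw [if_neg hj]

lemma dp_eq (x y : ℕ → ℝ) (xm ym : ℕ → ℤ)
    (hxm : ∀ ℓ, xm ℓ = (-1) ^ ℓ) (hym : ∀ ℓ, ym ℓ = (-1) ^ ℓ) (i j : ℕ)
    (hax : ∀ ℓ, 1 ≤ ℓ → ℓ < i → (x ℓ < x (ℓ + 1) ↔ Odd ℓ))
    (hay : ∀ ℓ, 1 ≤ ℓ → ℓ < j → (y ℓ < y (ℓ + 1) ↔ Odd ℓ)) :
    dp x y xm ym i j = dopeE (rl x i) (rl y j) := by
  refine le_antisymm ?_ ?_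
  · refine le_sInf ?_
    rintro c ⟨r, hal, rfl⟩
    exact dp_le x y xm ym hxm hym (i + j) i j rfl hax hay r hal
  · rcases dp_attain x y xm ym hxm hym (i + j) i j rfl hax hay with htop | ⟨r, hal, heq⟩
    · rw [htop]; exact le_top
    · rw [heq]; exact sInf_le ⟨r, hal, rfl⟩

end DopeAux

/-- Correctness of the DOPE dynamic programming recurrence: for strictly
alternating critical point sequences (1-indexed, starting with a min, so the
sign indicator at index `ℓ` is `(-1)^ℓ`), the DP value `d_{M_c, N_c}` equals
the DOPE distance. -/
theorem dp_eq_dope (Mc Nc : ℕ) (x y : ℕ → ℝ) (xm ym : ℕ → ℤ)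
    (hxm : ∀ ℓ, xm ℓ = (-1) ^ ℓ) (hym : ∀ ℓ, ym ℓ = (-1) ^ ℓ)
    (haltx : ∀ ℓ, 1 ≤ ℓ → ℓ < Mc → (x ℓ < x (ℓ + 1) ↔ Odd ℓ))
    (halty : ∀ ℓ, 1 ≤ ℓ → ℓ < Nc → (y ℓ < y (ℓ + 1) ↔ Odd ℓ)) :
    dp x y xm ym Mc Nc =
      dopeE ((List.range Mc).map fun k => x (k + 1))
            ((List.range Nc).map fun k => y (k + 1)) := by
  rw [DopeAux.dp_eq x y xm ym hxm hym Mc Nc haltx halty, DopeAux.dopeE_reverse,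
    DopeAux.rl_eq, DopeAux.rl_eq, List.reverse_reverse, List.reverse_reverse]
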